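/- With the pairing ⟨·,·⟩_p as above, if 𝐭 = 𝐩^{n−1} is a perfect (n−1)st power of a linear form 𝐩 ∈ V₁, then ⟨𝐭,𝐭⟩_p = 0 for every p ≥ 1. In particular, for n = 4 the quartic form Q(X) = ⟨⟨X,X⟩₂, ⟨X,X⟩₂⟩₂ on V₃ vanishes on all perfect cubes X = 𝐩³, and more generally on all polynomials of the form 𝐩²𝐫 with 𝐫 ∈ V₁. -/

import Mathlib

open MvPolynomial

/-- The standard symplectic form `ε` on indices `{0,1}`: `ε₀₁ = 1`, `ε₁₀ = −1`. -/
def epsSymp : Fin 2 → Fin 2 → ℝ :=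
  fun A B => if A = 0 ∧ B = 1 then 1 else if A = 1 ∧ B = 0 then -1 else 0

/-- The pairing `⟨t, s⟩_p` on polynomials in two variables, defined recursively. -/
noncomputable def pairing : ℕ → MvPolynomial (Fin 2) ℝ → MvPolynomial (Fin 2) ℝ →
    MvPolynomial (Fin 2) ℝ
  | 0, t, s => t * s
  | (p + 1), t, s =>
      ∑ A : Fin 2, ∑ B : Fin 2,
        C (epsSymp A B) * pairing p (pderiv A t) (pderiv B s)

lemma pairing_C_mul_left (k : ℕ) (a : ℝ) (t s : MvPolynomial (Fin 2) ℝ) :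
    pairing k (C a * t) s = C a * pairing k t s := by
  induction k generalizing t s with
  | zero => simp [pairing]; ring
  | succ k ih =>
      simp only [pairing, pderiv_C_mul, ih, Finset.mul_sum]
      congr 1; funext A; congr 1; funext B; ring

lemma pairing_C_mul_right (k : ℕ) (a : ℝ) (t s : MvPolynomial (Fin 2) ℝ) :
    pairing k t (C a * s) = C a * pairing k t s := by
  induction k generalizing t s with
  | zero => simp [pairing]; ring
  | succ k ih =>
      simp only [pairing, pderiv_C_mul, ih, Finset.mul_sum]
      congr 1; funext A; congr 1; funext B; ring

/-- key vanishing: if all partials of `t` are constant multiples of a common `u`,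
then `pairing (k+1) t t = 0`. -/
lemma vanish (k : ℕ) (t u : MvPolynomial (Fin 2) ℝ) (c : Fin 2 → ℝ)
    (h : ∀ A, pderiv A t = C (c A) * u) :
    pairing (k + 1) t t = 0 := by
  show (∑ A : Fin 2, ∑ B : Fin 2,
      C (epsSymp A B) * pairing k (pderiv A t) (pderiv B t)) = 0
  simp only [Fin.sum_univ_two, h, pairing_C_mul_left, pairing_C_mul_right, epsSymp]
  norm_num
  ring

/-- a homogeneous linear polynomial in two variables is `a·X₀ + b·X₁`. -/
lemma lin_repr (p : MvPolynomial (Fin 2) ℝ) (hp : p.IsHomogeneous 1) :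
    ∃ a b : ℝ, p = C a * X 0 + C b * X 1 := by
  refine ⟨coeff (Finsupp.single 0 1) p, coeff (Finsupp.single 1 1) p, ?_⟩
  ext d
  have hdeg : d.degree = d 0 + d 1 := by
    rw [Finsupp.degree_apply]
    rw [Finset.sum_subset (Finset.subset_univ d.support)
      (fun i _ hi => Finsupp.notMem_support_iff.mp hi)]
    simp [Fin.sum_univ_two]
  by_cases h1 : d.degree = 1
  · have h2 : d 0 + d 1 = 1 := by omega
    have : d = Finsupp.single 0 1 ∨ d = Finsupp.single 1 1 := by
      rcases Nat.le_one_iff_eq_zero_or_eq_one.mp (le_of_eq rfl) with _ | _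
      · exact if h0 : d 0 = 1 then Or.inl (by
          ext i; fin_cases i <;> simp [Finsupp.single_apply] <;> omega)
        else Or.inr (by
          ext i; fin_cases i <;> simp [Finsupp.single_apply] <;> omega)
      · exact if h0 : d 0 = 1 then Or.inl (by
          ext i; fin_cases i <;> simp [Finsupp.single_apply] <;> omega)
        else Or.inr (by
          ext i; fin_cases i <;> simp [Finsupp.single_apply] <;> omega)
    rcases this with h | h <;> subst h <;>
      simp [coeff_add, coeff_C_mul, coeff_X', Finsupp.single_left_inj]
  · rw [hp.coeff_eq_zero h1]
    have hX0 : coeff d (X 0 : MvPolynomial (Fin 2) ℝ) = 0 := by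
      rw [coeff_X']
      simp only [ite_eq_right_iff]
      intro h; exact absurd (by rw [← h]; simp [Finsupp.degree_apply, Finsupp.support_single_ne_zero]) h1
    have hX1 : coeff d (X 1 : MvPolynomial (Fin 2) ℝ) = 0 := by
      rw [coeff_X']
      simp only [ite_eq_right_iff]
      intro h; exact absurd (by rw [← h]; simp [Finsupp.degree_apply, Finsupp.support_single_ne_zero]) h1
    simp [coeff_add, coeff_C_mul, hX0, hX1]

theorem stmt_17 :
    (∀ p : MvPolynomial (Fin 2) ℝ, p.IsHomogeneous 1 → ∀ (n k : ℕ), 1 ≤ k →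
        pairing k (p ^ (n - 1)) (p ^ (n - 1)) = 0)
    ∧ (∀ p r : MvPolynomial (Fin 2) ℝ, p.IsHomogeneous 1 → r.IsHomogeneous 1 →
        pairing 2 (pairing 2 (p ^ 2 * r) (p ^ 2 * r))
          (pairing 2 (p ^ 2 * r) (p ^ 2 * r)) = 0) := by
  have pderiv_two : ∀ A : Fin 2, pderiv A (2 : MvPolynomial (Fin 2) ℝ) = 0 := by
    intro A
    rw [show (2 : MvPolynomial (Fin 2) ℝ) = C 2 from (map_ofNat C 2).symm]
    exact pderiv_C
  have pderiv_natCast : ∀ (n : ℕ) (A : Fin 2),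
      pderiv A ((n : MvPolynomial (Fin 2) ℝ)) = 0 := by
    intro n A
    rw [show ((n : MvPolynomial (Fin 2) ℝ)) = C (n : ℝ) from (map_natCast C n).symm]
    exact pderiv_C
  have pderiv_lin : ∀ (a b : ℝ) (A : Fin 2),
      pderiv A (C a * X 0 + C b * X 1 : MvPolynomial (Fin 2) ℝ)
        = C (if A = 0 then a else b) := by
    intro a b A
    fin_cases A <;> simp [pderiv_C_mul, pderiv_X]
  have pow_vanish : ∀ (a b : ℝ) (m k : ℕ),
      pairing (k + 1) ((C a * X 0 + C b * X 1 : MvPolynomial (Fin 2) ℝ) ^ m)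
        ((C a * X 0 + C b * X 1) ^ m) = 0 := by
    intro a b m k
    match m with
    | 0 =>
        exact vanish k _ 1 (fun _ => 0) (by intro A; simp)
    | m' + 1 =>
        refine vanish k _ ((C a * X 0 + C b * X 1) ^ m')
          (fun A => ((m' : ℝ) + 1) * (if A = 0 then a else b)) ?_
        intro A
        rw [pderiv_pow, pderiv_lin]
        simp only [map_add, map_mul, map_natCast, Nat.cast_add, Nat.cast_one, map_one,
          Nat.add_sub_cancel_left, Nat.add_sub_cancel]
        ring
  constructor
  · intro p hp n k hk
    obtain ⟨a, b, rfl⟩ := lin_repr p hp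
    obtain ⟨k', rfl⟩ : ∃ k', k = k' + 1 := ⟨k - 1, by omega⟩
    exact pow_vanish a b (n - 1) k'
  · intro p r hp hr
    obtain ⟨a, b, rfl⟩ := lin_repr p hp
    obtain ⟨u, v, rfl⟩ := lin_repr r hr
    have key : pairing 2 ((C a * X 0 + C b * X 1) ^ 2 * (C u * X 0 + C v * X 1))
        ((C a * X 0 + C b * X 1) ^ 2 * (C u * X 0 + C v * X 1))
        = C (-8 * (a * v - b * u) ^ 2) * (C a * X 0 + C b * X 1) ^ 2 := by
      simp only [pairing, Fin.sum_univ_two, epsSymp, pderiv_mul, pderiv_pow,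
        pderiv_C_mul, pderiv_X, pderiv_two, pderiv_natCast, map_add, map_neg, map_mul, map_sub,
        map_pow, map_ofNat]
      norm_num
      ring
    rw [key, pairing_C_mul_left, pairing_C_mul_right]
    rw [pow_vanish a b 2 1]
    simp
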